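/- For m, n ∈ ℕ with m ≥ 2, the group H_{m,n} = ⟨s_1, …, s_m, T | s_i², T^m, (s_i s_{i+1})^n, T⁻¹s_iT = s_{i+1} (indices mod m)⟩ is a semidirect product of the normal subgroup N = ⟨s_1, …, s_m⟩ and the cyclic group ℤ/mℤ generated by T; moreover N is isomorphic to the Coxeter group with presentation ⟨s_1, …, s_m | s_i², (s_i s_{i+1})^n⟩. -/

import Mathlib

/-- The cyclic successor `i ↦ i + 1 (mod m)` on `Fin m`. -/
def cycSucc {m : ℕ} (hm : 0 < m) (i : Fin m) : Fin m :=
  ⟨(i.val + 1) % m, Nat.mod_lt _ hm⟩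

/-- The relations of `H_{m,n} = ⟨s_1, …, s_m, T | s_i², Tᵐ, (s_i s_{i+1})ⁿ, T⁻¹s_iTs_{i+1}⟩`,
with indices taken mod `m`. The generator `Sum.inl i` is `s_i` and `Sum.inr ()` is `T`. -/
def relsHmn (m n : ℕ) (hm : 0 < m) : Set (FreeGroup (Fin m ⊕ Unit)) :=
  letI s : Fin m → FreeGroup (Fin m ⊕ Unit) := fun i => FreeGroup.of (Sum.inl i)
  letI T : FreeGroup (Fin m ⊕ Unit) := FreeGroup.of (Sum.inr ())
  {r | (∃ i, r = s i ^ 2) ∨ r = T ^ m ∨ (∃ i, r = (s i * s (cycSucc hm i)) ^ n) ∨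
    (∃ i, r = T⁻¹ * s i * T * s (cycSucc hm i))}

/-- The relations of the Coxeter-type group `⟨s_1, …, s_m | s_i², (s_i s_{i+1})ⁿ⟩`. -/
def relsCox (m n : ℕ) (hm : 0 < m) : Set (FreeGroup (Fin m)) :=
  {r | (∃ i, r = FreeGroup.of i ^ 2) ∨
    ∃ i, r = (FreeGroup.of i * FreeGroup.of (cycSucc hm i)) ^ n}

namespace Stmt10Aux

/-- cyclic predecessor -/
def cycPred {m : ℕ} (hm : 0 < m) (i : Fin m) : Fin m :=
  ⟨(i.val + (m - 1)) % m, Nat.mod_lt _ hm⟩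

lemma cycSucc_cycPred {m : ℕ} (hm : 0 < m) (i : Fin m) : cycSucc hm (cycPred hm i) = i := by
  have := i.isLt
  simp only [cycSucc, cycPred]
  ext
  simp only [Nat.mod_add_mod]
  have h1 : i.val + (m - 1) + 1 = i.val + m := by omega
  rw [h1, Nat.add_mod_right, Nat.mod_eq_of_lt this]

lemma cycPred_cycSucc {m : ℕ} (hm : 0 < m) (i : Fin m) : cycPred hm (cycSucc hm i) = i := by
  have := i.isLt
  simp only [cycSucc, cycPred]
  ext
  simp only [Nat.mod_add_mod]
  have h1 : i.val + 1 + (m - 1) = i.val + m := by omega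
  rw [h1, Nat.add_mod_right, Nat.mod_eq_of_lt this]

lemma mk_rel_one {α : Type*} (rels : Set (FreeGroup α)) {r : FreeGroup α} (hr : r ∈ rels) :
    PresentedGroup.mk rels r = 1 :=
  (QuotientGroup.eq_one_iff r).mpr (Subgroup.subset_normalClosure hr)

variable (m n : ℕ) (hm : 0 < m)

/-- abbreviations -/
abbrev W := PresentedGroup (relsCox m n hm)
abbrev H := PresentedGroup (relsHmn m n hm)

def sH (i : Fin m) : H m n hm := PresentedGroup.of (Sum.inl i)
def TH : H m n hm := PresentedGroup.of (Sum.inr ())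

lemma sH_sq (i : Fin m) : sH m n hm i ^ 2 = 1 := by
  show PresentedGroup.mk _ (FreeGroup.of (Sum.inl i)) ^ 2 = 1
  rw [← map_pow]
  exact mk_rel_one _ (Or.inl ⟨i, rfl⟩)

lemma TH_pow : TH m n hm ^ m = 1 := by
  show PresentedGroup.mk _ (FreeGroup.of (Sum.inr ())) ^ m = 1
  rw [← map_pow]
  exact mk_rel_one _ (Or.inr (Or.inl rfl))

lemma sH_br (i : Fin m) : (sH m n hm i * sH m n hm (cycSucc hm i)) ^ n = 1 := by
  show (PresentedGroup.mk _ (FreeGroup.of (Sum.inl i)) *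
    PresentedGroup.mk _ (FreeGroup.of (Sum.inl (cycSucc hm i)))) ^ n = 1
  rw [← map_mul, ← map_pow]
  exact mk_rel_one _ (Or.inr (Or.inr (Or.inl ⟨i, rfl⟩)))

lemma TH_conj (i : Fin m) :
    (TH m n hm)⁻¹ * sH m n hm i * TH m n hm * sH m n hm (cycSucc hm i) = 1 := by
  show (PresentedGroup.mk _ (FreeGroup.of (Sum.inr ())))⁻¹ *
    PresentedGroup.mk _ (FreeGroup.of (Sum.inl i)) *
    PresentedGroup.mk _ (FreeGroup.of (Sum.inr ())) *
    PresentedGroup.mk _ (FreeGroup.of (Sum.inl (cycSucc hm i))) = 1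
  rw [← map_inv, ← map_mul, ← map_mul, ← map_mul]
  exact mk_rel_one _ (Or.inr (Or.inr (Or.inr ⟨i, rfl⟩)))

def wof (i : Fin m) : W m n hm := PresentedGroup.of i

lemma wof_sq (i : Fin m) : wof m n hm i ^ 2 = 1 := by
  show PresentedGroup.mk _ (FreeGroup.of i) ^ 2 = 1
  rw [← map_pow]
  exact mk_rel_one _ (Or.inl ⟨i, rfl⟩)

lemma wof_br (i : Fin m) : (wof m n hm i * wof m n hm (cycSucc hm i)) ^ n = 1 := by
  show (PresentedGroup.mk _ (FreeGroup.of i) *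
    PresentedGroup.mk _ (FreeGroup.of (cycSucc hm i))) ^ n = 1
  rw [← map_mul, ← map_pow]
  exact mk_rel_one _ (Or.inr ⟨i, rfl⟩)


/-- shift endomorphism -/
def shiftHom : W m n hm →* W m n hm :=
  PresentedGroup.toGroup (f := fun i => wof m n hm (cycSucc hm i)) (by
    rintro r (⟨i, rfl⟩ | ⟨i, rfl⟩)
    · simp only [map_pow, FreeGroup.lift_apply_of]
      exact wof_sq m n hm _
    · simp only [map_pow, map_mul, FreeGroup.lift_apply_of]
      exact wof_br m n hm _)

def unshiftHom : W m n hm →* W m n hm :=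
  PresentedGroup.toGroup (f := fun i => wof m n hm (cycPred hm i)) (by
    rintro r (⟨i, rfl⟩ | ⟨i, rfl⟩)
    · simp only [map_pow, FreeGroup.lift_apply_of]
      exact wof_sq m n hm _
    · simp only [map_pow, map_mul, FreeGroup.lift_apply_of]
      have h := wof_br m n hm (cycPred hm i)
      rw [cycSucc_cycPred] at h
      rwa [cycPred_cycSucc])

@[simp] lemma shiftHom_of (i : Fin m) :
    shiftHom m n hm (wof m n hm i) = wof m n hm (cycSucc hm i) :=
  PresentedGroup.toGroup.of _

@[simp] lemma unshiftHom_of (i : Fin m) :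
    unshiftHom m n hm (wof m n hm i) = wof m n hm (cycPred hm i) :=
  PresentedGroup.toGroup.of _

def shift : W m n hm ≃* W m n hm :=
  MonoidHom.toMulEquiv (shiftHom m n hm) (unshiftHom m n hm)
    (by
      ext i
      show unshiftHom m n hm (shiftHom m n hm (wof m n hm i)) = wof m n hm i
      rw [shiftHom_of, unshiftHom_of, cycPred_cycSucc])
    (by
      ext i
      show shiftHom m n hm (unshiftHom m n hm (wof m n hm i)) = wof m n hm i
      rw [unshiftHom_of, shiftHom_of, cycSucc_cycPred])

@[simp] lemma shift_of (i : Fin m) :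
    shift m n hm (wof m n hm i) = wof m n hm (cycSucc hm i) :=
  shiftHom_of m n hm i

lemma shift_pow_of (k : ℕ) (i : Fin m) :
    (shift m n hm ^ k) (wof m n hm i) = wof m n hm ⟨(i.val + k) % m, Nat.mod_lt _ hm⟩ := by
  induction k with
  | zero =>
    have hi : (⟨(i.val + 0) % m, Nat.mod_lt _ hm⟩ : Fin m) = i := by
      ext; simp [Nat.mod_eq_of_lt i.isLt]
    rw [hi, pow_zero]
    rfl
  | succ k ih =>
    have hi : (⟨(i.val + (k + 1)) % m, Nat.mod_lt _ hm⟩ : Fin m) =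
        cycSucc hm ⟨(i.val + k) % m, Nat.mod_lt _ hm⟩ := by
      ext
      show (i.val + (k + 1)) % m = ((i.val + k) % m + 1) % m
      rw [Nat.mod_add_mod, Nat.add_assoc]
    rw [pow_succ']
    show (shift m n hm) ((shift m n hm ^ k) (wof m n hm i)) = _
    rw [ih, shift_of, hi]

lemma shift_pow_m : shift m n hm ^ m = 1 := by
  have key : ((shift m n hm ^ m : MulAut (W m n hm)) : W m n hm →* W m n hm) =
      MonoidHom.id (W m n hm) := by
    ext i
    show (shift m n hm ^ m) (wof m n hm i) = wof m n hm i
    rw [shift_pow_of]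
    congr 1
    ext
    show (i.val + m) % m = i.val
    rw [Nat.add_mod_right, Nat.mod_eq_of_lt i.isLt]
  ext x
  show ((shift m n hm ^ m : MulAut (W m n hm)) : W m n hm →* W m n hm) x = x
  rw [key]; rfl

lemma shift_pow_mod (k : ℕ) : shift m n hm ^ (k % m) = shift m n hm ^ k := by
  conv_rhs => rw [← Nat.div_add_mod k m, pow_add, pow_mul, shift_pow_m, one_pow, one_mul]


variable (hm2 : 2 ≤ m)

/-- action of ZMod m on W by shift -/
def phiAct : Multiplicative (ZMod m) →* MulAut (W m n hm) :=
  haveI : NeZero m := ⟨by omega⟩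
  { toFun := fun x => shift m n hm ^ (Multiplicative.toAdd x).val
    map_one' := by
      simp [ZMod.val_zero]
    map_mul' := by
      intro a b
      show shift m n hm ^ (Multiplicative.toAdd a + Multiplicative.toAdd b).val = _
      rw [ZMod.val_add, shift_pow_mod, pow_add] }

lemma phiAct_one_apply (i : Fin m) :
    phiAct m n hm hm2 (Multiplicative.ofAdd 1) (wof m n hm i) = wof m n hm (cycSucc hm i) := by
  haveI : Fact (1 < m) := ⟨by omega⟩
  show (shift m n hm ^ (ZMod.val (1 : ZMod m))) (wof m n hm i) = _
  rw [ZMod.val_one, pow_one, shift_of]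

abbrev G := SemidirectProduct (W m n hm) (Multiplicative (ZMod m)) (phiAct m n hm hm2)

open SemidirectProduct in
def rho : H m n hm →* G m n hm hm2 :=
  PresentedGroup.toGroup
    (f := Sum.elim (fun i => inl (wof m n hm i)) (fun _ => inr (Multiplicative.ofAdd (-1))))
    (by
      rintro r (⟨i, rfl⟩ | rfl | ⟨i, rfl⟩ | ⟨i, rfl⟩)
      · rw [map_pow, FreeGroup.lift_apply_of, Sum.elim_inl, ← map_pow, wof_sq, map_one]
      · have h0 : (Multiplicative.ofAdd (-1 : ZMod m)) ^ m = 1 := by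
          rw [← ofAdd_nsmul]
          have : m • (-1 : ZMod m) = 0 := by
            simp [nsmul_eq_mul, ZMod.natCast_self]
          rw [this, ofAdd_zero]
        rw [map_pow, FreeGroup.lift_apply_of, Sum.elim_inr, ← map_pow, h0, map_one]
      · rw [map_pow, map_mul, FreeGroup.lift_apply_of, FreeGroup.lift_apply_of, Sum.elim_inl, Sum.elim_inl,
          ← map_mul, ← map_pow, wof_br, map_one]
      · simp only [map_mul, map_inv, FreeGroup.lift_apply_of, Sum.elim_inl, Sum.elim_inr]
        have h1 : (inr (Multiplicative.ofAdd (-1 : ZMod m)))⁻¹ * inl (wof m n hm i) *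
            inr (Multiplicative.ofAdd (-1)) =
            (inl (phiAct m n hm hm2 (Multiplicative.ofAdd (1 : ZMod m)) (wof m n hm i)) :
              G m n hm hm2) := by
          rw [inl_aut]
          simp
        rw [mul_assoc, mul_assoc, ← mul_assoc (inl (wof m n hm i)), ← mul_assoc, ← mul_assoc, h1,
          phiAct_one_apply, ← map_mul, ← pow_two, wof_sq, map_one])


@[simp] lemma rho_s (i : Fin m) :
    rho m n hm hm2 (sH m n hm i) = SemidirectProduct.inl (wof m n hm i) :=
  PresentedGroup.toGroup.of _

/-- the map W → H -/
def chi : W m n hm →* H m n hm :=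
  PresentedGroup.toGroup (f := fun i => sH m n hm i) (by
    rintro r (⟨i, rfl⟩ | ⟨i, rfl⟩)
    · rw [map_pow, FreeGroup.lift_apply_of]
      exact sH_sq m n hm i
    · rw [map_pow, map_mul, FreeGroup.lift_apply_of, FreeGroup.lift_apply_of]
      exact sH_br m n hm i)

@[simp] lemma chi_of (i : Fin m) : chi m n hm (wof m n hm i) = sH m n hm i :=
  PresentedGroup.toGroup.of _

lemma rho_chi (w : W m n hm) :
    rho m n hm hm2 (chi m n hm w) = SemidirectProduct.inl w := by
  have : (rho m n hm hm2).comp (chi m n hm) =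
      (SemidirectProduct.inl : W m n hm →* G m n hm hm2) := by
    refine PresentedGroup.ext fun i => ?_
    show rho m n hm hm2 (chi m n hm (wof m n hm i)) = _
    rw [chi_of, rho_s]
    rfl
  exact DFunLike.congr_fun this w

include hm2 in
lemma chi_injective : Function.Injective (chi m n hm) := fun a b h => by
  have := congrArg (rho m n hm hm2) h
  rw [rho_chi m n hm hm2, rho_chi m n hm hm2] at this
  exact SemidirectProduct.inl_injective this

/-- the subgroup N -/
abbrev NN : Subgroup (H m n hm) :=
  Subgroup.closure (Set.range fun i : Fin m => PresentedGroup.of (Sum.inl i))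

lemma chi_range : (chi m n hm).range = NN m n hm := by
  rw [MonoidHom.range_eq_map, ← PresentedGroup.closure_range_of (relsCox m n hm),
    MonoidHom.map_closure]
  congr 1
  rw [← Set.range_comp]
  rfl

/-- the projection to ZMod m -/
def piZ : H m n hm →* Multiplicative (ZMod m) :=
  PresentedGroup.toGroup
    (f := Sum.elim (fun _ => 1) (fun _ => Multiplicative.ofAdd 1))
    (by
      rintro r (⟨i, rfl⟩ | rfl | ⟨i, rfl⟩ | ⟨i, rfl⟩)
      · rw [map_pow, FreeGroup.lift_apply_of, Sum.elim_inl, one_pow]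
      · rw [map_pow, FreeGroup.lift_apply_of, Sum.elim_inr, ← ofAdd_nsmul]
        have : m • (1 : ZMod m) = 0 := by simp [nsmul_eq_mul, ZMod.natCast_self]
        rw [this, ofAdd_zero]
      · rw [map_pow, map_mul, FreeGroup.lift_apply_of, FreeGroup.lift_apply_of, Sum.elim_inl, Sum.elim_inl,
          one_mul, one_pow]
      · simp)

@[simp] lemma piZ_s (i : Fin m) : piZ m n hm (sH m n hm i) = 1 :=
  PresentedGroup.toGroup.of _

@[simp] lemma piZ_T : piZ m n hm (TH m n hm) = Multiplicative.ofAdd 1 :=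
  PresentedGroup.toGroup.of _

lemma piZ_N {x : H m n hm} (hx : x ∈ NN m n hm) : piZ m n hm x = 1 := by
  have : NN m n hm ≤ (piZ m n hm).ker := by
    rw [Subgroup.closure_le]
    rintro _ ⟨i, rfl⟩
    exact piZ_s m n hm i
  exact this hx

lemma piZ_T_zpow (k : ℤ) :
    piZ m n hm (TH m n hm ^ k) = Multiplicative.ofAdd (k : ZMod m) := by
  rw [map_zpow, piZ_T, ← ofAdd_zsmul]
  congr 1
  rw [zsmul_eq_mul, mul_one]

lemma TH_zpow_eq_one {k : ℤ} (h : (k : ZMod m) = 0) : TH m n hm ^ k = 1 := by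
  obtain ⟨t, rfl⟩ := (ZMod.intCast_zmod_eq_zero_iff_dvd k m).mp h
  rw [zpow_mul, zpow_natCast, TH_pow, one_zpow]


lemma conj_mem_closure {Γ : Type*} [Group Γ] {S : Set Γ} {g : Γ}
    (h : ∀ x ∈ S, g * x * g⁻¹ ∈ Subgroup.closure S) :
    ∀ y ∈ Subgroup.closure S, g * y * g⁻¹ ∈ Subgroup.closure S := by
  intro y hy
  have hmap : (Subgroup.closure S).map (MulAut.conj g).toMonoidHom ≤ Subgroup.closure S := by
    rw [MonoidHom.map_closure, Subgroup.closure_le]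
    rintro _ ⟨x, hx, rfl⟩
    simpa using h x hx
  exact hmap ⟨y, hy, by simp⟩

lemma mem_normalizer_of_conj {Γ : Type*} [Group Γ] {S : Set Γ} {g : Γ}
    (h1 : ∀ x ∈ S, g * x * g⁻¹ ∈ Subgroup.closure S)
    (h2 : ∀ x ∈ S, g⁻¹ * x * g ∈ Subgroup.closure S) :
    g ∈ Subgroup.normalizer (Subgroup.closure S : Set Γ) := by
  rw [Subgroup.mem_normalizer_iff]
  intro h
  constructor
  · exact fun hh => conj_mem_closure h1 h hh
  · intro hh
    have h2' : ∀ x ∈ S, g⁻¹ * x * g⁻¹⁻¹ ∈ Subgroup.closure S := by simpa using h2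
    have h3 := conj_mem_closure h2' _ hh
    have h4 : g⁻¹ * (g * h * g⁻¹) * g⁻¹⁻¹ = h := by group
    rwa [h4] at h3

lemma NN_normal : (NN m n hm).Normal := by
  rw [← Subgroup.normalizer_eq_top_iff, eq_top_iff,
    ← PresentedGroup.closure_range_of (relsHmn m n hm), Subgroup.closure_le]
  rintro _ ⟨x, rfl⟩
  cases x with
  | inl j =>
    apply mem_normalizer_of_conj
    · rintro _ ⟨i, rfl⟩
      exact mul_mem (mul_mem (Subgroup.subset_closure ⟨j, rfl⟩)
        (Subgroup.subset_closure ⟨i, rfl⟩)) (inv_mem (Subgroup.subset_closure ⟨j, rfl⟩))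
    · rintro _ ⟨i, rfl⟩
      exact mul_mem (mul_mem (inv_mem (Subgroup.subset_closure ⟨j, rfl⟩))
        (Subgroup.subset_closure ⟨i, rfl⟩)) (Subgroup.subset_closure ⟨j, rfl⟩)
  | inr u =>
    cases u
    apply mem_normalizer_of_conj
    · rintro _ ⟨j, rfl⟩
      have h := TH_conj m n hm (cycPred hm j)
      rw [cycSucc_cycPred] at h
      have h' : (TH m n hm)⁻¹ * sH m n hm (cycPred hm j) * TH m n hm = (sH m n hm j)⁻¹ :=
        mul_eq_one_iff_eq_inv.mp h
      have hj : sH m n hm j = (TH m n hm)⁻¹ * (sH m n hm (cycPred hm j))⁻¹ * TH m n hm := by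
        calc sH m n hm j = ((sH m n hm j)⁻¹)⁻¹ := (inv_inv _).symm
          _ = ((TH m n hm)⁻¹ * sH m n hm (cycPred hm j) * TH m n hm)⁻¹ := by rw [h']
          _ = (TH m n hm)⁻¹ * (sH m n hm (cycPred hm j))⁻¹ * TH m n hm := by group
      have h2 : TH m n hm * sH m n hm j * (TH m n hm)⁻¹ = (sH m n hm (cycPred hm j))⁻¹ := by
        rw [hj]; group
      show TH m n hm * sH m n hm j * (TH m n hm)⁻¹ ∈ _
      rw [h2]
      exact inv_mem (Subgroup.subset_closure ⟨cycPred hm j, rfl⟩)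
    · rintro _ ⟨i, rfl⟩
      have h' : (TH m n hm)⁻¹ * sH m n hm i * TH m n hm = (sH m n hm (cycSucc hm i))⁻¹ :=
        mul_eq_one_iff_eq_inv.mp (TH_conj m n hm i)
      show (TH m n hm)⁻¹ * sH m n hm i * TH m n hm ∈ _
      rw [h']
      exact inv_mem (Subgroup.subset_closure ⟨cycSucc hm i, rfl⟩)

lemma inf_bot : NN m n hm ⊓ Subgroup.zpowers (TH m n hm) = ⊥ := by
  rw [eq_bot_iff]
  intro x hx
  rw [Subgroup.mem_inf] at hx
  obtain ⟨hxN, hxT⟩ := hx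
  obtain ⟨k, rfl⟩ := Subgroup.mem_zpowers_iff.mp hxT
  have h1 := piZ_N m n hm hxN
  rw [piZ_T_zpow] at h1
  have h2 : (k : ZMod m) = 0 := by simpa using congrArg Multiplicative.toAdd h1
  rw [Subgroup.mem_bot]
  exact TH_zpow_eq_one m n hm h2

lemma sup_top : NN m n hm ⊔ Subgroup.zpowers (TH m n hm) = ⊤ := by
  rw [eq_top_iff, ← PresentedGroup.closure_range_of (relsHmn m n hm), Subgroup.closure_le]
  rintro _ ⟨x, rfl⟩
  cases x with
  | inl i => exact Subgroup.mem_sup_left (Subgroup.subset_closure ⟨i, rfl⟩)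
  | inr u =>
    cases u
    exact Subgroup.mem_sup_right (Subgroup.mem_zpowers _)

include hm2 in
lemma equivT_nonempty :
    Nonempty ((Subgroup.zpowers (TH m n hm)) ≃* Multiplicative (ZMod m)) := by
  haveI : NeZero m := ⟨by omega⟩
  refine ⟨MulEquiv.ofBijective ((piZ m n hm).domRestrict (Subgroup.zpowers (TH m n hm)))
    ⟨?_, ?_⟩⟩
  · rw [injective_iff_map_eq_one]
    rintro ⟨x, hx⟩ h
    obtain ⟨k, rfl⟩ := Subgroup.mem_zpowers_iff.mp hx
    have h1 : Multiplicative.ofAdd ((k : ZMod m)) = 1 := by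
      rw [← piZ_T_zpow m n hm k]
      exact h
    have h2 : (k : ZMod m) = 0 := by simpa using congrArg Multiplicative.toAdd h1
    exact Subtype.ext (TH_zpow_eq_one m n hm h2)
  · intro y
    refine ⟨⟨TH m n hm ^ (((Multiplicative.toAdd y).val : ℤ)),
      Subgroup.zpow_mem _ (Subgroup.mem_zpowers _) _⟩, ?_⟩
    show piZ m n hm (TH m n hm ^ (((Multiplicative.toAdd y).val : ℤ))) = y
    rw [piZ_T_zpow]
    have : ((((Multiplicative.toAdd y).val : ℤ)) : ZMod m) = Multiplicative.toAdd y := by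
      rw [Int.cast_natCast, ZMod.natCast_val, ZMod.cast_id]
    rw [this]
    simp

include hm2 in
lemma equivN_nonempty : Nonempty (NN m n hm ≃* W m n hm) :=
  ⟨(MulEquiv.subgroupCongr (chi_range m n hm)).symm.trans
    (MonoidHom.ofInjective (chi_injective m n hm hm2)).symm⟩

end Stmt10Aux

/-- for `m ≥ 2`, `H_{m,n}` is the semidirect product of the normal subgroup
`N = ⟨s_1, …, s_m⟩` and the cyclic group `ℤ/mℤ` generated by `T`; moreover `N` is the
Coxeter group `⟨s_1, …, s_m | s_i², (s_i s_{i+1})ⁿ⟩`. -/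
theorem stmt10 (m n : ℕ) (hm2 : 2 ≤ m) (hn : 0 < n) :
    ∀ hm : 0 < m,
    letI H := PresentedGroup (relsHmn m n hm)
    letI N : Subgroup H := Subgroup.closure (Set.range fun i : Fin m =>
      PresentedGroup.of (Sum.inl i))
    letI T : H := PresentedGroup.of (Sum.inr ())
    N.Normal ∧ N ⊓ Subgroup.zpowers T = ⊥ ∧ N ⊔ Subgroup.zpowers T = ⊤ ∧
      Nonempty ((Subgroup.zpowers T) ≃* Multiplicative (ZMod m)) ∧
      Nonempty (N ≃* PresentedGroup (relsCox m n hm)) := by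
  intro hm
  exact ⟨Stmt10Aux.NN_normal m n hm, Stmt10Aux.inf_bot m n hm, Stmt10Aux.sup_top m n hm,
    Stmt10Aux.equivT_nonempty m n hm hm2, Stmt10Aux.equivN_nonempty m n hm hm2⟩
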